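/- For every permutation v ≤ w in Bruhat order and every fixed reduced expression w = s_{i_t}···s_{i_1}, the positive distinguished subexpression (PDS) of v, defined greedily from right to left by setting v_{(0)} = v and v_{(j)} = v_{(j-1)} s_{i_j} if this decreases length and v_{(j)} = v_{(j-1)} otherwise, terminates with v_{(t)} = identity, and the selected simple reflections read in order form a reduced expression for v. -/

import Mathlib

/-- The Coxeter length of a permutation of `Fin n`: its number of inversions. -/
def permLen {n : ℕ} (σ : Equiv.Perm (Fin n)) : ℕ :=
  (Finset.univ.filter (fun p : Fin n × Fin n => p.1 < p.2 ∧ σ p.2 < σ p.1)).card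

/-- The simple transposition `s_a = (a, a+1)` of `Fin n` (as an element of `S_n`),
defined to be the identity if `a + 1 ≥ n`.  (Here positions are 0-indexed, so `sT n a`
corresponds to the simple transposition `s_{a+1}` in 1-indexed notation.) -/
def sT (n : ℕ) (a : ℕ) : Equiv.Perm (Fin n) :=
  if h : a + 1 < n then Equiv.swap ⟨a, Nat.lt_of_succ_lt h⟩ ⟨a + 1, h⟩ else 1

/-- The group element of the expression `s_{i_t} ⋯ s_{i_1}` encoded by the list
`[i_t, …, i_1]` (leftmost letter first), where permutations are multiplied left to right
(i.e. acting on the right), so that `exprProd (a :: l) = exprProd l * sT n a`. -/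
def exprProd (n : ℕ) (l : List ℕ) : Equiv.Perm (Fin n) :=
  l.foldr (fun a g => g * sT n a) 1

/-- A word is reduced if its length equals the Coxeter length of its product. -/
def IsReducedW (n : ℕ) (l : List ℕ) : Prop :=
  permLen (exprProd n l) = l.length

/-- Greedy right-to-left computation of the positive distinguished subexpression:
the input list is the word read from the right (`ω.reverse`); the state is
`v_{(j)}`, and a letter is selected exactly when right-multiplying by it decreases
length.  Returns the final state `v_{(t)}` together with the selected letters in
processing order (right to left). -/
def pdsAux (n : ℕ) : Equiv.Perm (Fin n) → List ℕ → Equiv.Perm (Fin n) × List ℕ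
  | v, [] => (v, [])
  | v, a :: rest =>
    if permLen (sT n a * v) < permLen v then
      ((pdsAux n (sT n a * v) rest).1, a :: (pdsAux n (sT n a * v) rest).2)
    else pdsAux n v rest

/-- The positive distinguished subexpression of `v` inside the word `ω`
(read in word order, leftmost letter first). -/
def pds (n : ℕ) (v : Equiv.Perm (Fin n)) (ω : List ℕ) : List ℕ :=
  (pdsAux n v ω.reverse).2.reverse

namespace PDSproof

/-- The left-to-right product of a word: `wp (a :: R) = sT n a * wp R`. -/
def wp (n : ℕ) : List ℕ → Equiv.Perm (Fin n)
  | [] => 1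
  | a :: R => sT n a * wp n R

lemma exprProd_nil (n : ℕ) : exprProd n [] = 1 := rfl

lemma exprProd_cons (n : ℕ) (a : ℕ) (l : List ℕ) :
    exprProd n (a :: l) = exprProd n l * sT n a := rfl

lemma exprProd_append (n : ℕ) (l₁ l₂ : List ℕ) :
    exprProd n (l₁ ++ l₂) = exprProd n l₂ * exprProd n l₁ := by
  induction l₁ with
  | nil => simp [exprProd_nil]
  | cons a l ih =>
      rw [List.cons_append, exprProd_cons, exprProd_cons, ih, mul_assoc]

lemma wp_eq (n : ℕ) (R : List ℕ) : wp n R = exprProd n R.reverse := by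
  induction R with
  | nil => rfl
  | cons a R ih =>
      rw [wp, List.reverse_cons, exprProd_append, ih, exprProd_cons, exprProd_nil, one_mul]

lemma permLen_one {n : ℕ} : permLen (1 : Equiv.Perm (Fin n)) = 0 := by
  rw [permLen, Finset.card_eq_zero, Finset.filter_eq_empty_iff]
  rintro p - ⟨h1, h2⟩
  simp only [Equiv.Perm.one_apply] at h2
  exact absurd h1 (not_lt.2 h2.le)

lemma swap_lt_swap_iff {n : ℕ} {i j : Fin n} (hij : (j : ℕ) = (i : ℕ) + 1) {x y : Fin n}
    (h1 : ¬(x = i ∧ y = j)) (h2 : ¬(x = j ∧ y = i)) :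
    Equiv.swap i j x < Equiv.swap i j y ↔ x < y := by
  simp only [Equiv.swap_apply_def]
  split_ifs <;>
    (try subst_eqs) <;>
    simp only [Fin.lt_def, Fin.ext_iff] at * <;>
    first | omega | simp_all

lemma permLen_swap_mul_of_lt {n : ℕ} {i j : Fin n} (hij : (j : ℕ) = (i : ℕ) + 1)
    (v : Equiv.Perm (Fin n)) (hv : v⁻¹ i < v⁻¹ j) :
    permLen (Equiv.swap i j * v) = permLen v + 1 := by
  have hiltj : i < j := by simp [Fin.lt_def, hij]
  set s := Equiv.swap i j with hs
  set p0 : Fin n × Fin n := (v⁻¹ i, v⁻¹ j) with hp0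
  have hQ : (Finset.univ.filter
        (fun p : Fin n × Fin n => p.1 < p.2 ∧ (s * v) p.2 < (s * v) p.1))
      = insert p0 (Finset.univ.filter
        (fun p : Fin n × Fin n => p.1 < p.2 ∧ v p.2 < v p.1)) := by
    ext p
    simp only [Finset.mem_insert, Finset.mem_filter, Finset.mem_univ, true_and]
    simp only [Equiv.Perm.mul_apply]
    constructor
    · rintro ⟨hp, hsv⟩
      by_cases hpp : p = p0
      · exact Or.inl hpp
      · refine Or.inr ⟨hp, ?_⟩
        rw [swap_lt_swap_iff hij ?_ ?_] at hsv
        · exact hsv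
        · rintro ⟨e1, e2⟩
          have : p.2 = v⁻¹ i := by rw [← e1, Equiv.Perm.coe_inv, Equiv.symm_apply_apply]
          have h2 : p.1 = v⁻¹ j := by rw [← e2, Equiv.Perm.coe_inv, Equiv.symm_apply_apply]
          rw [this, h2] at hp
          exact absurd (hv.trans hp) (lt_irrefl _)
        · rintro ⟨e1, e2⟩
          apply hpp
          have e1' : p.2 = v⁻¹ j := by rw [← e1, Equiv.Perm.coe_inv, Equiv.symm_apply_apply]
          have e2' : p.1 = v⁻¹ i := by rw [← e2, Equiv.Perm.coe_inv, Equiv.symm_apply_apply]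
          exact Prod.ext e2' e1'
    · rintro (rfl | ⟨hp, hvp⟩)
      · refine ⟨hv, ?_⟩
        simp only [hp0, Equiv.Perm.coe_inv, Equiv.apply_symm_apply]
        rw [hs, Equiv.swap_apply_left, Equiv.swap_apply_right]
        exact hiltj
      · refine ⟨hp, ?_⟩
        rw [swap_lt_swap_iff hij ?_ ?_]
        · exact hvp
        · rintro ⟨e1, e2⟩
          have e1' : p.2 = v⁻¹ i := by rw [← e1, Equiv.Perm.coe_inv, Equiv.symm_apply_apply]
          have e2' : p.1 = v⁻¹ j := by rw [← e2, Equiv.Perm.coe_inv, Equiv.symm_apply_apply]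
          rw [e1', e2'] at hp
          exact absurd (hv.trans hp) (lt_irrefl _)
        · rintro ⟨e1, e2⟩
          rw [e1, e2] at hvp
          exact absurd (hiltj.trans hvp) (lt_irrefl _)
  have hp0notmem : p0 ∉ (Finset.univ.filter
      (fun p : Fin n × Fin n => p.1 < p.2 ∧ v p.2 < v p.1)) := by
    simp only [Finset.mem_filter, Finset.mem_univ, true_and, hp0,
      Equiv.Perm.coe_inv, Equiv.apply_symm_apply, not_and]
    intro _
    exact not_lt.2 hiltj.le
  rw [permLen, permLen, hQ, Finset.card_insert_of_notMem hp0notmem]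

lemma permLen_swap_mul_of_gt {n : ℕ} {i j : Fin n} (hij : (j : ℕ) = (i : ℕ) + 1)
    (v : Equiv.Perm (Fin n)) (hv : v⁻¹ j < v⁻¹ i) :
    permLen (Equiv.swap i j * v) + 1 = permLen v := by
  have key := permLen_swap_mul_of_lt hij (Equiv.swap i j * v) ?_
  · rw [Equiv.swap_mul_self_mul] at key
    omega
  · have e : (Equiv.swap i j * v)⁻¹ = v⁻¹ * Equiv.swap i j := by
      rw [mul_inv_rev, Equiv.swap_inv]
    rw [e]
    simp only [Equiv.Perm.mul_apply, Equiv.swap_apply_left, Equiv.swap_apply_right]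
    exact hv

lemma permLen_lt_iff {n : ℕ} {i j : Fin n} (hij : (j : ℕ) = (i : ℕ) + 1)
    (v : Equiv.Perm (Fin n)) :
    permLen (Equiv.swap i j * v) < permLen v ↔ v⁻¹ j < v⁻¹ i := by
  rcases lt_trichotomy (v⁻¹ i) (v⁻¹ j) with h | h | h
  · rw [permLen_swap_mul_of_lt hij v h]
    constructor
    · intro hh; omega
    · intro hh; exact absurd (h.trans hh) (lt_irrefl _)
  · exfalso
    have : i = j := v⁻¹.injective h
    rw [this] at hij
    omega
  · have := permLen_swap_mul_of_gt hij v h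
    constructor
    · intro _; exact h
    · intro _; omega

lemma sT_eq {n a : ℕ} (h : a + 1 < n) :
    sT n a = Equiv.swap ⟨a, Nat.lt_of_succ_lt h⟩ ⟨a + 1, h⟩ := dif_pos h

lemma permLen_wp_le {n : ℕ} (R : List ℕ) (hR : ∀ b ∈ R, b + 1 < n) :
    permLen (wp n R) ≤ R.length := by
  induction R with
  | nil => rw [wp]; rw [permLen_one]; exact Nat.zero_le _
  | cons a R ih =>
      have ha : a + 1 < n := hR a (List.mem_cons_self)
      have ih' := ih (fun b hb => hR b (List.mem_cons_of_mem _ hb))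
      rw [wp, sT_eq ha, List.length_cons]
      set i : Fin n := ⟨a, Nat.lt_of_succ_lt ha⟩
      set j : Fin n := ⟨a + 1, ha⟩
      have hij : (j : ℕ) = (i : ℕ) + 1 := rfl
      rcases lt_trichotomy ((wp n R)⁻¹ i) ((wp n R)⁻¹ j) with h | h | h
      · rw [permLen_swap_mul_of_lt hij _ h]; omega
      · exfalso
        have : i = j := (wp n R)⁻¹.injective h
        have := congrArg Fin.val this
        simp [i, j] at this
      · have := permLen_swap_mul_of_gt hij _ h; omega

lemma exchange {n : ℕ} : ∀ (m : List ℕ), (∀ b ∈ m, b + 1 < n) → ∀ (x y : Fin n), x < y →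
    (wp n m)⁻¹ y < (wp n m)⁻¹ x →
    ∃ m', m'.Sublist m ∧ wp n m' = Equiv.swap x y * wp n m ∧ m'.length + 1 = m.length := by
  intro m
  induction m with
  | nil =>
      intro _ x y hxy hlt
      rw [wp] at hlt
      simp only [inv_one, Equiv.Perm.one_apply] at hlt
      exact absurd (hxy.trans hlt) (lt_irrefl _)
  | cons b rest ih =>
      intro hm x y hxy hlt
      have hb : b + 1 < n := hm b (List.mem_cons_self)
      set i : Fin n := ⟨b, Nat.lt_of_succ_lt hb⟩ with hi
      set j : Fin n := ⟨b + 1, hb⟩ with hj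
      have hij : (j : ℕ) = (i : ℕ) + 1 := rfl
      have hwp : wp n (b :: rest) = Equiv.swap i j * wp n rest := by rw [wp, sT_eq hb]
      by_cases hcase : x = i ∧ y = j
      · obtain ⟨rfl, rfl⟩ := hcase
        refine ⟨rest, List.sublist_cons_self _ _, ?_, rfl⟩
        rw [hwp, Equiv.swap_mul_self_mul]
      · have hcase2 : ¬(x = j ∧ y = i) := by
          rintro ⟨rfl, rfl⟩
          exact absurd hxy (by simp [hi, hj, Fin.lt_def])
        set s := Equiv.swap i j with hs
        have hx' : s x < s y := (swap_lt_swap_iff hij hcase hcase2).2 hxy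
        have hlt' : (wp n rest)⁻¹ (s y) < (wp n rest)⁻¹ (s x) := by
          have e : (wp n (b :: rest))⁻¹ = (wp n rest)⁻¹ * s := by
            rw [hwp, mul_inv_rev, Equiv.swap_inv]
          rw [e] at hlt
          simpa only [Equiv.Perm.mul_apply] using hlt
        obtain ⟨m'', hsub, hprod, hlen⟩ :=
          ih (fun c hc => hm c (List.mem_cons_of_mem _ hc)) (s x) (s y) hx' hlt'
        refine ⟨b :: m'', List.cons_sublist_cons.2 hsub, ?_, by simp [hlen]⟩
        rw [wp, sT_eq hb, hprod, hwp, ← hs]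
        have conj : Equiv.swap (s x) (s y) = s * Equiv.swap x y * s⁻¹ :=
          Equiv.swap_apply_apply s x y
        rw [conj, hs]
        simp only [Equiv.swap_inv, ← mul_assoc, Equiv.swap_mul_self, one_mul]

lemma pds_main {n : ℕ} : ∀ (R : List ℕ), (∀ b ∈ R, b + 1 < n) → ∀ v : Equiv.Perm (Fin n),
    (∃ m, m.Sublist R ∧ wp n m = v ∧ m.length = permLen v) →
    (pdsAux n v R).1 = 1 ∧ wp n (pdsAux n v R).2 = v ∧
      (pdsAux n v R).2.length = permLen v := by
  intro R
  induction R with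
  | nil =>
      rintro - v ⟨m, hsub, hprod, hlen⟩
      have hmnil : m = [] := List.sublist_nil.1 hsub
      subst hmnil
      rw [wp] at hprod
      subst hprod
      refine ⟨rfl, rfl, ?_⟩
      rw [permLen_one]
      rfl
  | cons a rest ih =>
      rintro hR v ⟨m, hsub, hprod, hlen⟩
      have ha : a + 1 < n := hR a (List.mem_cons_self)
      have hrest : ∀ b ∈ rest, b + 1 < n := fun b hb => hR b (List.mem_cons_of_mem _ hb)
      set i : Fin n := ⟨a, Nat.lt_of_succ_lt ha⟩ with hi
      set j : Fin n := ⟨a + 1, ha⟩ with hj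
      have hij : (j : ℕ) = (i : ℕ) + 1 := rfl
      by_cases hc : permLen (sT n a * v) < permLen v
      · have hvinv : v⁻¹ j < v⁻¹ i := by
          rw [sT_eq ha, permLen_lt_iff hij] at hc
          exact hc
        have hlen' : permLen (sT n a * v) + 1 = permLen v := by
          rw [sT_eq ha]
          exact permLen_swap_mul_of_gt hij v hvinv
        have hm' : ∃ m', m'.Sublist rest ∧ wp n m' = sT n a * v ∧
            m'.length = permLen (sT n a * v) := by
          rcases List.sublist_cons_iff.1 hsub with hsub' | ⟨m₀, rfl, hsub₀⟩
          · obtain ⟨m', hs, hp, hl⟩ := exchange m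
              (fun b hb => hrest b (hsub'.subset hb)) i j
              (by simp [Fin.lt_def, hi, hj]) (by rw [hprod]; exact hvinv)
            refine ⟨m', hs.trans hsub', ?_, ?_⟩
            · rw [hp, hprod, sT_eq ha]
            · omega
          · refine ⟨m₀, hsub₀, ?_, ?_⟩
            · rw [← hprod, wp, ← mul_assoc, sT_eq ha, ← hi, ← hj,
                Equiv.swap_mul_self, one_mul]
            · rw [List.length_cons] at hlen
              omega
        obtain ⟨r1, r2, r3⟩ := ih hrest (sT n a * v) hm'
        simp only [pdsAux, if_pos hc]
        refine ⟨r1, ?_, ?_⟩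
        · rw [wp, r2, ← mul_assoc, sT_eq ha, Equiv.swap_mul_self, one_mul]
        · rw [List.length_cons, r3]
          omega
      · have hmrest : m.Sublist rest := by
          rcases List.sublist_cons_iff.1 hsub with h' | ⟨m₀, rfl, hsub₀⟩
          · exact h'
          · exfalso
            apply hc
            have hv : sT n a * v = wp n m₀ := by
              rw [← hprod, wp, ← mul_assoc, sT_eq ha, Equiv.swap_mul_self, one_mul]
            have hle := permLen_wp_le m₀ (fun b hb => hrest b (hsub₀.subset hb))
            rw [List.length_cons] at hlen
            rw [hv]
            omega
        obtain ⟨r1, r2, r3⟩ := ih hrest v ⟨m, hmrest, hprod, hlen⟩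
        simp only [pdsAux, if_neg hc]
        exact ⟨r1, r2, r3⟩

end PDSproof

/-- For `v ≤ w` in Bruhat order (expressed via the subword property: some sublist of the
fixed reduced word `ω` for `w` is a reduced word for `v`), the greedy positive
distinguished subexpression procedure terminates at the identity, and the selected
simple reflections, read in word order, form a reduced expression for `v`. -/
theorem stmt2 (n : ℕ) (w v : Equiv.Perm (Fin n)) (ω : List ℕ)
    (hletters : ∀ a ∈ ω, a + 1 < n)
    (hred : IsReducedW n ω) (hw : exprProd n ω = w)
    (hbruhat : ∃ l : List ℕ, l.Sublist ω ∧ IsReducedW n l ∧ exprProd n l = v) :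
    (pdsAux n v ω.reverse).1 = 1 ∧
      IsReducedW n (pds n v ω) ∧ exprProd n (pds n v ω) = v := by
  obtain ⟨l, hsub, hredl, hprodl⟩ := hbruhat
  have hR : ∀ b ∈ ω.reverse, b + 1 < n := fun b hb => hletters b (List.mem_reverse.1 hb)
  have key := PDSproof.pds_main ω.reverse hR v
    ⟨l.reverse, hsub.reverse, ?_, ?_⟩
  · obtain ⟨k1, k2, k3⟩ := key
    have hprodpds : exprProd n (pds n v ω) = v := by
      rw [pds, ← PDSproof.wp_eq, k2]
    refine ⟨k1, ?_, hprodpds⟩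
    rw [IsReducedW, hprodpds, pds, List.length_reverse, k3]
  · rw [PDSproof.wp_eq, List.reverse_reverse, hprodl]
  · rw [List.length_reverse, ← hprodl]
    exact hredl.symm
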